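/- The function k(x, x') = |θ_x|^{1/4} |θ_{x'}|^{1/4} |θ_x + θ_{x'}|^{-1/2} exp(-½ (x - x')ᵀ (θ_x + θ_{x'})^{-1} (x - x')), where θ_x is any assignment of positive-definite diagonal matrices to input points x, is a positive semidefinite kernel. -/

import Mathlib

open MeasureTheory Matrix Real

noncomputable def gfun (a s : ℝ) (u : ℝ) : ℝ :=
  (2 * π) ^ (-(1:ℝ)/4) * a ^ (-(1:ℝ)/4) * Real.exp (-((u - s)^2 / (2 * a)))

lemma exp_prod (a b s t : ℝ) (ha : 0 < a) (hb : 0 < b) (u : ℝ) :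
    Real.exp (-((u-s)^2/(2*a))) * Real.exp (-((u-t)^2/(2*b))) =
    Real.exp (-((s-t)^2/(2*(a+b)))) *
      Real.exp (-((a+b)/(2*a*b)) * (u - (b*s+a*t)/(a+b))^2) := by
  rw [← Real.exp_add, ← Real.exp_add]
  congr 1
  have h1 : a ≠ 0 := ha.ne'
  have h2 : b ≠ 0 := hb.ne'
  have h3 : a + b ≠ 0 := (add_pos ha hb).ne'
  field_simp
  ring

lemma gfun_mul (a b s t : ℝ) (ha : 0 < a) (hb : 0 < b) (u : ℝ) :
    gfun a s u * gfun b t u =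
      ((2*π) ^ (-(1:ℝ)/4) * a ^ (-(1:ℝ)/4) * ((2*π) ^ (-(1:ℝ)/4) * b ^ (-(1:ℝ)/4)) *
        Real.exp (-((s-t)^2/(2*(a+b))))) *
      Real.exp (-((a+b)/(2*a*b)) * (u - (b*s+a*t)/(a+b))^2) := by
  unfold gfun
  rw [mul_mul_mul_comm, exp_prod a b s t ha hb u]
  ring

lemma gmul_integrable (a b s t : ℝ) (ha : 0 < a) (hb : 0 < b) :
    Integrable (fun u => gfun a s u * gfun b t u) := by
  have hβ : 0 < (a+b)/(2*a*b) := by positivity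
  have heq : (fun u => gfun a s u * gfun b t u) =
      fun u => ((2*π) ^ (-(1:ℝ)/4) * a ^ (-(1:ℝ)/4) * ((2*π) ^ (-(1:ℝ)/4) * b ^ (-(1:ℝ)/4)) *
        Real.exp (-((s-t)^2/(2*(a+b))))) *
      Real.exp (-((a+b)/(2*a*b)) * (u - (b*s+a*t)/(a+b))^2) := by
    funext u; exact gfun_mul a b s t ha hb u
  rw [heq]
  exact ((integrable_exp_neg_mul_sq hβ).comp_sub_right _).const_mul _

lemma const_combine (a b : ℝ) (ha : 0 < a) (hb : 0 < b) :
    (2*π) ^ (-(1:ℝ)/4) * a ^ (-(1:ℝ)/4) * ((2*π) ^ (-(1:ℝ)/4) * b ^ (-(1:ℝ)/4)) *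
      Real.sqrt (π / ((a+b)/(2*a*b))) =
    a ^ ((1:ℝ)/4) * b ^ ((1:ℝ)/4) * (a+b) ^ (-(1:ℝ)/2) := by
  have hab : 0 < a + b := add_pos ha hb
  have hπ : (0:ℝ) < 2 * π := by positivity
  have h1 : π / ((a+b)/(2*a*b)) = (2*π) * a * b / (a+b) := by
    field_simp
  rw [h1, Real.sqrt_eq_rpow]
  rw [Real.div_rpow (by positivity) hab.le, Real.mul_rpow (by positivity) hb.le,
    Real.mul_rpow hπ.le ha.le]
  rw [show (-(1:ℝ)/2) = -((1:ℝ)/2) by norm_num, Real.rpow_neg hab.le]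
  have e1 : (2*π) ^ (-(1:ℝ)/4) * (2*π) ^ (-(1:ℝ)/4) * (2*π) ^ ((1:ℝ)/2) = 1 := by
    rw [← Real.rpow_add hπ, ← Real.rpow_add hπ]; norm_num
  have e3 : a ^ (-(1:ℝ)/4) * a ^ ((1:ℝ)/2) = a ^ ((1:ℝ)/4) := by
    rw [← Real.rpow_add ha]; norm_num
  have e4 : b ^ (-(1:ℝ)/4) * b ^ ((1:ℝ)/2) = b ^ ((1:ℝ)/4) := by
    rw [← Real.rpow_add hb]; norm_num
  calc (2*π) ^ (-(1:ℝ)/4) * a ^ (-(1:ℝ)/4) * ((2*π) ^ (-(1:ℝ)/4) * b ^ (-(1:ℝ)/4)) *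
      ((2*π) ^ ((1:ℝ)/2) * a ^ ((1:ℝ)/2) * b ^ ((1:ℝ)/2) / (a+b) ^ ((1:ℝ)/2))
      = ((2*π) ^ (-(1:ℝ)/4) * (2*π) ^ (-(1:ℝ)/4) * (2*π) ^ ((1:ℝ)/2)) *
        ((a ^ (-(1:ℝ)/4) * a ^ ((1:ℝ)/2)) * (b ^ (-(1:ℝ)/4) * b ^ ((1:ℝ)/2)) *
        ((a+b) ^ ((1:ℝ)/2))⁻¹) := by ring
    _ = a ^ ((1:ℝ)/4) * b ^ ((1:ℝ)/4) * ((a+b) ^ ((1:ℝ)/2))⁻¹ := by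
        rw [e1, e3, e4]; ring

lemma gmul_integral (a b s t : ℝ) (ha : 0 < a) (hb : 0 < b) :
    ∫ u, gfun a s u * gfun b t u =
      a ^ ((1:ℝ)/4) * b ^ ((1:ℝ)/4) * (a+b) ^ (-(1:ℝ)/2) *
        Real.exp (-(1/2) * ((s - t) * ((a+b)⁻¹ * (s - t)))) := by
  have hβ : 0 < (a+b)/(2*a*b) := by positivity
  have hab : (0:ℝ) < a + b := add_pos ha hb
  simp_rw [gfun_mul a b s t ha hb]
  rw [integral_const_mul]
  have hint : ∫ u : ℝ, Real.exp (-((a+b)/(2*a*b)) * (u - (b*s+a*t)/(a+b))^2)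
      = Real.sqrt (π / ((a+b)/(2*a*b))) := by
    rw [integral_sub_right_eq_self (fun v => Real.exp (-((a+b)/(2*a*b)) * v^2))
      ((b*s+a*t)/(a+b))]
    exact integral_gaussian _
  rw [hint]
  have he : Real.exp (-((s-t)^2/(2*(a+b)))) = Real.exp (-(1/2) * ((s - t) * ((a+b)⁻¹ * (s - t)))) := by
    congr 1; field_simp
  rw [he, ← const_combine a b ha hb]
  ring

lemma gram_posSemidef {α : Type*} [MeasureSpace α] {n : ℕ} (g : Fin n → α → ℝ)
    (hg : ∀ i j, Integrable (fun u => g i u * g j u)) :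
    Matrix.PosSemidef (Matrix.of fun i j => ∫ u, g i u * g j u) := by
  rw [Matrix.posSemidef_iff_dotProduct_mulVec]
  constructor
  · ext i j
    simp only [conjTranspose_apply, of_apply, star_trivial]
    simp_rw [mul_comm]
  · intro y
    have key : ∀ u, (∑ i, y i * g i u) ^ 2 = ∑ i, ∑ j, (y i * y j) * (g i u * g j u) := by
      intro u
      rw [sq, Finset.sum_mul_sum]
      exact Finset.sum_congr rfl fun i _ => Finset.sum_congr rfl fun j _ => by ring
    have h2 : ∫ u, (∑ i, y i * g i u) ^ 2
        = ∑ i, ∑ j, (y i * y j) * ∫ u, g i u * g j u := by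
      simp_rw [key]
      rw [integral_finset_sum _ (fun i _ =>
        integrable_finset_sum _ (fun j _ => ((hg i j).const_mul _)))]
      refine Finset.sum_congr rfl fun i _ => ?_
      rw [integral_finset_sum _ (fun j _ => ((hg i j).const_mul _))]
      exact Finset.sum_congr rfl fun j _ => MeasureTheory.integral_const_mul _ _
    have h3 : star y ⬝ᵥ ((Matrix.of fun i j => ∫ u, g i u * g j u) *ᵥ y)
        = ∑ i, ∑ j, (y i * y j) * ∫ u, g i u * g j u := by
      simp only [star_trivial, dotProduct, mulVec, of_apply, Finset.mul_sum]
      exact Finset.sum_congr rfl fun i _ => Finset.sum_congr rfl fun j _ => by ring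
    rw [h3, ← h2]
    exact integral_nonneg fun u => sq_nonneg _

/-- the non-stationary Gaussian covariance
`k(x,x') = |θ_x|^{1/4} |θ_{x'}|^{1/4} |θ_x + θ_{x'}|^{-1/2}
           exp(-½ (x-x')ᵀ (θ_x + θ_{x'})⁻¹ (x-x'))`
is a positive semidefinite kernel. -/
theorem nonstationary_gauss_kernel_posSemidef (d n : ℕ)
    (θ : (Fin d → ℝ) → Matrix (Fin d) (Fin d) ℝ)
    (hθpd : ∀ x, (θ x).PosDef) (hθdiag : ∀ x, (θ x).IsDiag)
    (x : Fin n → (Fin d → ℝ)) :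
    Matrix.PosSemidef
      (Matrix.of fun i j : Fin n =>
        (θ (x i)).det ^ ((1 : ℝ) / 4) * (θ (x j)).det ^ ((1 : ℝ) / 4) *
          (θ (x i) + θ (x j)).det ^ (-(1 : ℝ) / 2) *
          Real.exp (-(1 / 2) *
            ((x i - x j) ⬝ᵥ (θ (x i) + θ (x j))⁻¹ *ᵥ (x i - x j)))) := by
  set dθ : Fin n → Fin d → ℝ := fun i l => θ (x i) l l with hdθ
  have hdiag : ∀ i, Matrix.diagonal (dθ i) = θ (x i) := fun i =>
    (hθdiag (x i)).diagonal_diag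
  have hpos : ∀ i l, 0 < dθ i l := by
    intro i l
    have h := hθpd (x i)
    rw [← hdiag i] at h
    exact (Matrix.posDef_diagonal_iff.mp h) l
  set G : Fin n → (Fin d → ℝ) → ℝ := fun i u => ∏ l, gfun (dθ i l) (x i l) (u l) with hG
  have hGmul : ∀ i j u, G i u * G j u
      = ∏ l, (gfun (dθ i l) (x i l) (u l) * gfun (dθ j l) (x j l) (u l)) := by
    intro i j u
    rw [hG, ← Finset.prod_mul_distrib]
  have hInt : ∀ i j, Integrable (fun u => G i u * G j u) := by
    intro i j
    simp_rw [hGmul]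
    exact Integrable.fintype_prod fun l =>
      gmul_integrable _ _ _ _ (hpos i l) (hpos j l)
  have hEntry : ∀ i j,
      (θ (x i)).det ^ ((1 : ℝ) / 4) * (θ (x j)).det ^ ((1 : ℝ) / 4) *
        (θ (x i) + θ (x j)).det ^ (-(1 : ℝ) / 2) *
        Real.exp (-(1 / 2) *
          ((x i - x j) ⬝ᵥ (θ (x i) + θ (x j))⁻¹ *ᵥ (x i - x j)))
      = ∫ u, G i u * G j u := by
    intro i j
    have e1 : (θ (x i)).det = ∏ l, dθ i l := by rw [← hdiag i, det_diagonal]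
    have e2 : (θ (x j)).det = ∏ l, dθ j l := by rw [← hdiag j, det_diagonal]
    have e3 : (θ (x i) + θ (x j)).det = ∏ l, (dθ i l + dθ j l) := by
      rw [← hdiag i, ← hdiag j, diagonal_add, det_diagonal]
    have e4 : (x i - x j) ⬝ᵥ (θ (x i) + θ (x j))⁻¹ *ᵥ (x i - x j)
        = ∑ l, (x i l - x j l) * ((dθ i l + dθ j l)⁻¹ * (x i l - x j l)) := by
      have hinv : (Matrix.diagonal (fun l => dθ i l + dθ j l))⁻¹
          = Matrix.diagonal (fun l => (dθ i l + dθ j l)⁻¹) := by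
        apply Matrix.inv_eq_right_inv
        rw [diagonal_mul_diagonal]
        have : (fun l => (dθ i l + dθ j l) * (dθ i l + dθ j l)⁻¹) = fun _ => (1:ℝ) := by
          funext l
          exact mul_inv_cancel₀ (add_pos (hpos i l) (hpos j l)).ne'
        rw [this, diagonal_one]
      rw [← hdiag i, ← hdiag j, diagonal_add, hinv]
      simp [dotProduct, mulVec_diagonal]
    have hi : ∀ l ∈ Finset.univ, (0:ℝ) ≤ dθ i l := fun l _ => (hpos i l).le
    have hj : ∀ l ∈ Finset.univ, (0:ℝ) ≤ dθ j l := fun l _ => (hpos j l).le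
    have hij : ∀ l ∈ Finset.univ, (0:ℝ) ≤ dθ i l + dθ j l := fun l _ =>
      (add_pos (hpos i l) (hpos j l)).le
    rw [e1, e2, e3, e4,
      ← Real.finset_prod_rpow _ _ hi _, ← Real.finset_prod_rpow _ _ hj _,
      ← Real.finset_prod_rpow _ _ hij _, Finset.mul_sum, Real.exp_sum,
      ← Finset.prod_mul_distrib, ← Finset.prod_mul_distrib, ← Finset.prod_mul_distrib]
    simp_rw [hGmul i j]
    rw [MeasureTheory.integral_fintype_prod_volume_eq_prod
      (fun l v => gfun (dθ i l) (x i l) v * gfun (dθ j l) (x j l) v)]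
    exact Finset.prod_congr rfl fun l _ =>
      (gmul_integral _ _ _ _ (hpos i l) (hpos j l)).symm
  have : (Matrix.of fun i j : Fin n =>
        (θ (x i)).det ^ ((1 : ℝ) / 4) * (θ (x j)).det ^ ((1 : ℝ) / 4) *
          (θ (x i) + θ (x j)).det ^ (-(1 : ℝ) / 2) *
          Real.exp (-(1 / 2) *
            ((x i - x j) ⬝ᵥ (θ (x i) + θ (x j))⁻¹ *ᵥ (x i - x j))))
      = Matrix.of fun i j => ∫ u, G i u * G j u := by
    ext i j
    exact hEntry i j
  rw [this]
  exact gram_posSemidef G hInt
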